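/- arXiv:1506.06515 — 2 statements merged into one kernel-verified Lean document; each statement's English description precedes it below -/
import Mathlib

section
/- Let 𝒢 be a sequence of covers with inverse limit (X,f). Suppose nonnegative real numbers μ(U(e)) are assigned to all e ∈ E_n, n ∈ ℕ, such that: (i) for every n ∈ ℕ and v ∈ V_n, Σ_{e∈E_n with terminal vertex v} μ(U(e)) = Σ_{e∈E_n with initial vertex v} μ(U(e)); and (ii) for all m > n and every e ∈ E_n, Σ_{e′∈E_m with φ_{m,n}(e′)=e} μ(U(e′)) = μ(U(e)). Then there exists an f-invariant Borel measure μ on X with μ(U(e)) equal to the assigned value for every e ∈ E_n and every n ∈ ℕ. -/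
open Filter Topology MeasureTheory

/-- A (directed) graph on a vertex set `V`: an edge relation `E ⊆ V × V`
whose two coordinate projections are surjective. -/
structure DirGraph (V : Type) : Type where
  E : Set (V × V)
  surj_init : ∀ v : V, ∃ u : V, (v, u) ∈ E
  surj_term : ∀ v : V, ∃ u : V, (u, v) ∈ E

/-- A walk of length `l` in `G`. -/
def IsWalk {V : Type} (G : DirGraph V) (l : ℕ) (w : Fin (l + 1) → V) : Prop :=
  ∀ i : Fin l, (w i.castSucc, w i.succ) ∈ G.E

/-- The edge set of a walk. -/
def walkEdges {V : Type} {l : ℕ} (w : Fin (l + 1) → V) : Set (V × V) :=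
  {e | ∃ i : Fin l, e = (w i.castSucc, w i.succ)}

/-- `c` is the edge set of a circuit of `G`: a closed walk whose vertices are
pairwise distinct except that the initial and terminal vertices coincide. -/
def IsCircuitIn {V : Type} (G : DirGraph V) (c : Set (V × V)) : Prop :=
  ∃ l : ℕ, 0 < l ∧ ∃ w : Fin (l + 1) → V,
    IsWalk G l w ∧ w (Fin.last l) = w 0 ∧
    (∀ i j : Fin (l + 1), i < j → w i = w j → i = 0 ∧ j = Fin.last l) ∧
    c = walkEdges w

/-- The set `𝒞(G)` of circuit graphs of `G` (a circuit graph is identified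
with its edge set). -/
def circuitsOf {V : Type} (G : DirGraph V) : Set (Set (V × V)) :=
  {c | IsCircuitIn G c}

/-- The vertex set of a circuit graph (given by its edge set). -/
def circVerts {V : Type} (c : Set (V × V)) : Set V :=
  {v | ∃ e ∈ c, v = e.1 ∨ v = e.2}

/-- The element `Σ_{e ∈ E(c)} e` of the vector space with basis the edges,
associated with a circuit graph `c`. -/
noncomputable def circVec {V : Type} (c : Set (V × V)) : V × V → ℝ :=
  c.indicator fun _ => 1

/-- `c̃ = (1/Per(c))·c` where `Per(c)` is the number of edges of `c`. -/
noncomputable def circTilde {V : Type} (c : Set (V × V)) : V × V → ℝ :=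
  fun e => ((Set.ncard c : ℝ))⁻¹ * circVec c e

/-- Membership in `ℳ(G)`: nonnegative coefficients supported on the edges. -/
def MemM {V : Type} [Fintype V] (G : DirGraph V) (a : V × V → ℝ) : Prop :=
  (∀ e, 0 ≤ a e) ∧ ∀ e, e ∉ G.E → a e = 0

/-- Membership in `ℐ(G)`: at every vertex the incoming coefficient sum equals
the outgoing coefficient sum. -/
def MemI {V : Type} [Fintype V] (G : DirGraph V) (a : V × V → ℝ) : Prop :=
  MemM G a ∧ ∀ v : V, (∑ u : V, a (u, v)) = ∑ u : V, a (v, u)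

/-- Membership in `𝒫(G)`: elements of `ℐ(G)` of total mass `1`. -/
def MemP {V : Type} [Fintype V] (G : DirGraph V) (a : V × V → ℝ) : Prop :=
  MemI G a ∧ (∑ e : V × V, a e) = 1

/-- The action of a map on edges. -/
def edgeMap {V₁ V₂ : Type} (ψ : V₁ → V₂) (e : V₁ × V₁) : V₂ × V₂ := (ψ e.1, ψ e.2)

/-- `ψ : G₁ → G₂` is a cover: an edge-surjective, positive-directional
graph homomorphism. -/
structure IsCover {V₁ V₂ : Type} (G₁ : DirGraph V₁) (G₂ : DirGraph V₂) (ψ : V₁ → V₂) : Prop where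
  hom : ∀ u v : V₁, (u, v) ∈ G₁.E → (ψ u, ψ v) ∈ G₂.E
  edgeSurj : ∀ e ∈ G₂.E, ∃ u v : V₁, (u, v) ∈ G₁.E ∧ (ψ u, ψ v) = e
  posDir : ∀ u v v' : V₁, (u, v) ∈ G₁.E → (u, v') ∈ G₁.E → ψ v = ψ v'

/-- The induced linear map `ψ_*` on edge vectors: the coefficient of an edge `e`
of the target is the sum of the coefficients of its preimages. -/
noncomputable def pushVec {V₁ V₂ : Type} (ψ : V₁ → V₂) (a : V₁ × V₁ → ℝ) : V₂ × V₂ → ℝ :=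
  fun e => ∑ᶠ e' ∈ {e' : V₁ × V₁ | edgeMap ψ e' = e}, a e'

/-- Euclidean distance on finite-dimensional coordinate spaces. -/
noncomputable def dE {ι : Type} [Fintype ι] (a b : ι → ℝ) : ℝ :=
  Real.sqrt (∑ i : ι, (a i - b i) ^ 2)

/-- A sequence of covers `G₀ ← G₁ ← G₂ ← ⋯` of finite graphs, with `G₀`
the one-vertex graph (with a single loop). -/
structure CoverSystem : Type 1 where
  V : ℕ → Type
  fintypeV : ∀ n, Fintype (V n)
  G : ∀ n, DirGraph (V n)
  φ : ∀ n, V (n + 1) → V n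
  cover : ∀ n, IsCover (G (n + 1)) (G n) (φ n)
  V0_single : ∀ x y : V 0, x = y

namespace CoverSystem

instance (S : CoverSystem) (n : ℕ) : Fintype (S.V n) := S.fintypeV n
instance (S : CoverSystem) (n : ℕ) : TopologicalSpace (S.V n) := ⊥
instance (S : CoverSystem) (n : ℕ) : DiscreteTopology (S.V n) := ⟨rfl⟩

/-- `φ_{n+k, n}` as a composition of the covering maps. -/
def phiIter (S : CoverSystem) (n : ℕ) : ∀ k : ℕ, S.V (n + k) → S.V n
  | 0 => fun v => v
  | k + 1 => fun v => S.phiIter n k (S.φ (n + k) v)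

/-- `φ_{m,n} : V m → V n` for `n ≤ m`. -/
def phiLE (S : CoverSystem) {m n : ℕ} (h : n ≤ m) (v : S.V m) : S.V n :=
  S.phiIter n (m - n) (cast (congrArg S.V (Nat.add_sub_cancel' h).symm) v)

/-- The inverse limit space `X` of the sequence of covers. -/
def X (S : CoverSystem) : Type :=
  { x : ∀ n, S.V n // ∀ n, S.φ n (x (n + 1)) = x n }

instance (S : CoverSystem) : TopologicalSpace S.X :=
  inferInstanceAs (TopologicalSpace { x : ∀ n, S.V n // ∀ n, S.φ n (x (n + 1)) = x n })

instance (S : CoverSystem) : MeasurableSpace S.X := borel S.X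
instance (S : CoverSystem) : BorelSpace S.X := ⟨rfl⟩

/-- The projection `φ_{∞,n} : X → V n`. -/
def proj (S : CoverSystem) (x : S.X) (n : ℕ) : S.V n := Subtype.val x n

/-- `f` is the shift map of the inverse limit: it is compatible with all the
edge relations (this determines `f` uniquely). -/
def IsLimitMap (S : CoverSystem) (f : S.X → S.X) : Prop :=
  ∀ (x : S.X) (n : ℕ), (S.proj x n, S.proj (f x) n) ∈ (S.G n).E

/-- `U(v) = φ_{∞,n}⁻¹(v)`. -/
def USet (S : CoverSystem) {n : ℕ} (v : S.V n) : Set S.X := {x | S.proj x n = v}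

/-- `U(e) = U(u) ∩ f⁻¹(U(v))` for an edge `e = (u,v)`. -/
def UEdge (S : CoverSystem) (f : S.X → S.X) {n : ℕ} (e : S.V n × S.V n) : Set S.X :=
  {x | S.proj x n = e.1 ∧ S.proj (f x) n = e.2}

/-- `μ` is an `f`-invariant Borel measure. -/
def Invariant (S : CoverSystem) (f : S.X → S.X) (μ : Measure S.X) : Prop :=
  ∀ B : Set S.X, MeasurableSet B → μ (f ⁻¹' B) = μ B

/-- `μ` is ergodic: every invariant Borel set is null or conull. -/
def ErgodicM (S : CoverSystem) (f : S.X → S.X) (μ : Measure S.X) : Prop :=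
  ∀ B : Set S.X, MeasurableSet B → f ⁻¹' B = B → μ B = 0 ∨ μ B = 1

/-- The vector `μ_n = Σ_{e ∈ E_n} μ(U(e))·e ∈ Δ_n` of a measure `μ`. -/
noncomputable def muVec (S : CoverSystem) (f : S.X → S.X) (μ : Measure S.X) (n : ℕ) :
    S.V n × S.V n → ℝ :=
  fun e => (μ (S.UEdge f e)).toReal

/-- `Δ_∞`: compatible sequences of elements of the simplices `Δ_n = 𝒫(G_n)`. -/
def DeltaInf (S : CoverSystem) : Set (∀ n, S.V n × S.V n → ℝ) :=
  {x | (∀ n, MemP (S.G n) (x n)) ∧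
    ∀ m n : ℕ, ∀ h : n ≤ m, pushVec (S.phiLE h) (x m) = x n}

/-- `C` is a system of circuits enumerated by `N'`. -/
def IsCircuitSystem (S : CoverSystem) (N' : Set ℕ)
    (C : ∀ n, Set (Set (S.V n × S.V n))) : Prop :=
  ∀ n ∈ N', C n ⊆ circuitsOf (S.G n)

/-- The system of circuits `C` expresses the measure `μ`. -/
def Expresses (S : CoverSystem) (f : S.X → S.X) (μ : Measure S.X)
    (N' : Set ℕ) (C : ∀ n, Set (Set (S.V n × S.V n))) : Prop :=
  ∀ n ∈ N', ∃ s : Set (S.V n × S.V n) → ℝ,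
    (∀ c ∈ C n, 0 ≤ s c) ∧ ∀ e, S.muVec f μ n e = ∑ᶠ c ∈ C n, s c * circTilde c e

/-- The system of circuits `C` expresses every ergodic invariant Borel
probability measure. -/
def ExpressesAllErgodic (S : CoverSystem) (f : S.X → S.X)
    (N' : Set ℕ) (C : ∀ n, Set (Set (S.V n × S.V n))) : Prop :=
  ∀ μ : Measure S.X, IsProbabilityMeasure μ → S.Invariant f μ → S.ErgodicM f μ →
    S.Expresses f μ N' C

/-- `𝒞̄_∞`: the set of limit sequences of sequences of circuits chosen from `C`. -/
def limitsOf (S : CoverSystem) (N' : Set ℕ)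
    (C : ∀ n, Set (Set (S.V n × S.V n))) : Set (∀ m, S.V m × S.V m → ℝ) :=
  {y | ∃ c : ∀ n, Set (S.V n × S.V n), (∀ n ∈ N', c n ∈ C n) ∧
    ∀ m : ℕ, Filter.Tendsto
      (fun n : ℕ => if h : m ≤ n then dE (pushVec (S.phiLE h) (circTilde (c n))) (y m) else 1)
      (Filter.atTop ⊓ Filter.principal N') (nhds 0)}

end CoverSystem

namespace CoverSystem

variable {S : CoverSystem}

lemma phiIter_proj (x : S.X) (n k : ℕ) : S.phiIter n k (S.proj x (n + k)) = S.proj x n := by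
  induction k with
  | zero => rfl
  | succ k ih =>
      have hx : S.φ (n + k) (S.proj x (n + k + 1)) = S.proj x (n + k) := x.prop (n + k)
      show S.phiIter n k (S.φ (n + k) (S.proj x (n + k + 1))) = S.proj x n
      rw [hx]; exact ih

lemma phiLE_proj {n m : ℕ} (h : n ≤ m) (x : S.X) : S.phiLE h (S.proj x m) = S.proj x n := by
  obtain ⟨k, rfl⟩ : ∃ k, m = n + k := ⟨m - n, (Nat.add_sub_cancel' h).symm⟩
  have key : ∀ (j : ℕ) (_ : j = k) (pf : S.V (n + k) = S.V (n + j)),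
      S.phiIter n j (cast pf (S.proj x (n + k))) = S.proj x n := by
    rintro j rfl pf
    exact phiIter_proj x n j
  exact key _ (by omega) _

lemma phiLE_succ_self {n : ℕ} (h : n ≤ n + 1) (v : S.V (n + 1)) : S.phiLE h v = S.φ n v := by
  have key : ∀ (j : ℕ) (_ : j = 1) (pf : S.V (n + 1) = S.V (n + j)),
      S.phiIter n j (cast pf v) = S.φ n v := by
    rintro j rfl pf
    rfl
  exact key _ (by omega) _

lemma phiLE_refl {n : ℕ} (h : n ≤ n) (v : S.V n) : S.phiLE h v = v := by
  have key : ∀ (j : ℕ) (_ : j = 0) (pf : S.V n = S.V (n + j)),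
      S.phiIter n j (cast pf v) = v := by
    rintro j rfl pf
    rfl
  exact key _ (by omega) _

lemma proj_eq_of_proj_eq {x y : S.X} {m : ℕ} (hxy : S.proj x m = S.proj y m)
    {n : ℕ} (h : n ≤ m) : S.proj x n = S.proj y n := by
  rw [← phiLE_proj h x, hxy, phiLE_proj h y]

variable {f : S.X → S.X}

lemma projf_eq (hf : S.IsLimitMap f) {x y : S.X} {n : ℕ}
    (h : S.proj x (n + 1) = S.proj y (n + 1)) : S.proj (f x) n = S.proj (f y) n := by
  have hx := hf x (n + 1)
  have hy := hf y (n + 1)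
  rw [h] at hx
  have hpd := (S.cover n).posDir _ _ _ hy hx
  have ex : S.proj (f x) n = S.φ n (S.proj (f x) (n + 1)) := ((f x).prop n).symm
  have ey : S.proj (f y) n = S.φ n (S.proj (f y) (n + 1)) := ((f y).prop n).symm
  rw [ex, ey, hpd]

lemma continuous_proj (n : ℕ) : Continuous fun x : S.X => S.proj x n :=
  (continuous_apply n).comp continuous_subtype_val

lemma continuous_projf (hf : S.IsLimitMap f) (n : ℕ) :
    Continuous fun x : S.X => S.proj (f x) n := by
  classical
  let g : S.V (n + 1) → S.V n := fun u =>
    if h : ∃ x : S.X, S.proj x (n + 1) = u then S.proj (f h.choose) n else S.φ n u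
  have hg : ∀ x : S.X, S.proj (f x) n = g (S.proj x (n + 1)) := by
    intro x
    have h : ∃ y : S.X, S.proj y (n + 1) = S.proj x (n + 1) := ⟨x, rfl⟩
    simp only [g, dif_pos h]
    exact (projf_eq hf h.choose_spec).symm
  have : (fun x : S.X => S.proj (f x) n) = g ∘ fun x => S.proj x (n + 1) := funext hg
  rw [this]
  exact continuous_of_discreteTopology.comp (continuous_proj _)

lemma continuous_limit_map (hf : S.IsLimitMap f) : Continuous f := by
  apply continuous_induced_rng.mpr
  apply continuous_pi
  intro n
  exact continuous_projf hf n

instance : CompactSpace S.X := by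
  have hcl : IsClosed {x : ∀ n, S.V n | ∀ n, S.φ n (x (n + 1)) = x n} := by
    have : {x : ∀ n, S.V n | ∀ n, S.φ n (x (n + 1)) = x n} =
        ⋂ n, {x : ∀ n, S.V n | S.φ n (x (n + 1)) = x n} := by
      ext x; simp [Set.mem_iInter]
    rw [this]
    refine isClosed_iInter fun n => ?_
    have hc : Continuous fun x : ∀ n, S.V n => (S.φ n (x (n + 1)), x n) :=
      (continuous_of_discreteTopology.comp (continuous_apply (n + 1))).prodMk
        (continuous_apply n)
    exact IsClosed.preimage hc (isClosed_discrete {p : S.V n × S.V n | p.1 = p.2})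
  exact isCompact_iff_compactSpace.mp hcl.isCompact

lemma isOpen_USet {n : ℕ} (v : S.V n) : IsOpen (S.USet v) :=
  IsOpen.preimage (continuous_proj n) (isOpen_discrete {v})

lemma isClosed_USet {n : ℕ} (v : S.V n) : IsClosed (S.USet v) :=
  IsClosed.preimage (continuous_proj n) (isClosed_discrete {v})

lemma UEdge_eq {n : ℕ} (e : S.V n × S.V n) :
    S.UEdge f e = {x | S.proj x n = e.1} ∩ (fun x => S.proj (f x) n) ⁻¹' {e.2} := rfl

lemma isOpen_UEdge (hf : S.IsLimitMap f) {n : ℕ} (e : S.V n × S.V n) :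
    IsOpen (S.UEdge f e) := by
  rw [UEdge_eq]
  exact (isOpen_USet e.1).inter (IsOpen.preimage (continuous_projf hf n) (isOpen_discrete _))

lemma isClosed_UEdge (hf : S.IsLimitMap f) {n : ℕ} (e : S.V n × S.V n) :
    IsClosed (S.UEdge f e) := by
  rw [UEdge_eq]
  exact (isClosed_USet e.1).inter
    (IsClosed.preimage (continuous_projf hf n) (isClosed_discrete _))

lemma isOpen_eq_iUnion {u : Set S.X} (hu : IsOpen u) :
    u = ⋃ (p : Σ n, S.V n) (_ : S.USet p.2 ⊆ u), S.USet p.2 := by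
  ext x
  simp only [Set.mem_iUnion]
  constructor
  · intro hx
    obtain ⟨U, hUopen, hUeq⟩ := isOpen_induced_iff.mp hu
    have hxU : x.val ∈ U := by rw [← hUeq] at hx; exact hx
    obtain ⟨I, t, hIt, hsub⟩ := isOpen_pi_iff.mp hUopen x.val hxU
    set N := I.sup id with hN
    refine ⟨⟨N, S.proj x N⟩, ?_, rfl⟩
    intro y hy
    have hyx : ∀ i ∈ I, y.val i = x.val i := by
      intro i hi
      exact proj_eq_of_proj_eq (x := y) (y := x) hy (Finset.le_sup (f := id) hi)
    have : y.val ∈ U := by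
      apply hsub
      intro i hi
      rw [hyx i hi]
      exact (hIt i hi).2
    rw [← hUeq]
    exact this
  · rintro ⟨p, hp, hxp⟩
    exact hp hxp

lemma mem_UEdge {n : ℕ} {e : S.V n × S.V n} {x : S.X} :
    x ∈ S.UEdge f e ↔ S.proj x n = e.1 ∧ S.proj (f x) n = e.2 := Iff.rfl

lemma mem_UEdge_data (hf : S.IsLimitMap f) (x : S.X) (n : ℕ) :
    x ∈ S.UEdge f (S.proj x n, S.proj (f x) n) := ⟨rfl, rfl⟩

lemma UEdge_empty_of_not_mem (hf : S.IsLimitMap f) {n : ℕ} {e : S.V n × S.V n}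
    (he : e ∉ (S.G n).E) : S.UEdge f e = ∅ := by
  ext x
  simp only [Set.mem_empty_iff_false, iff_false]
  intro hx
  have := hf x n
  rw [hx.1, hx.2] at this
  exact he this

lemma USet_eq_iUnion_UEdge (hf : S.IsLimitMap f) {n : ℕ} (v : S.V n) :
    S.USet v = ⋃ w : S.V n, S.UEdge f (v, w) := by
  ext x
  simp only [Set.mem_iUnion]
  constructor
  · intro hx
    exact ⟨S.proj (f x) n, hx, rfl⟩
  · rintro ⟨w, hw, -⟩
    exact hw

lemma phi_cast {p q : ℕ} (h : p = q) (pf : S.V (p + 1) = S.V (q + 1)) (v : S.V (p + 1)) :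
    S.φ q (cast pf v) = cast (congrArg S.V h) (S.φ p v) := by
  subst h; rfl

lemma phiIter_phi {m : ℕ} : ∀ (k : ℕ) (v : S.V (m + 1 + k))
    (pf : S.V (m + 1 + k) = S.V (m + (k + 1))),
    S.φ m (S.phiIter (m + 1) k v) = S.phiIter m (k + 1) (cast pf v)
  | 0, v, pf => rfl
  | k + 1, v, pf => by
    show S.φ m (S.phiIter (m + 1) k (S.φ (m + 1 + k) v)) =
      S.phiIter m (k + 1) (S.φ (m + (k + 1)) (cast pf v))
    have h : m + 1 + k = m + (k + 1) := by omega
    rw [phi_cast (S := S) h pf v]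
    exact phiIter_phi k _ _

lemma phi_phiLE {m n : ℕ} (h : m + 1 ≤ n) (h' : m ≤ n) (v : S.V n) :
    S.φ m (S.phiLE h v) = S.phiLE h' v := by
  obtain ⟨k, rfl⟩ : ∃ k, n = m + 1 + k := ⟨n - (m + 1), (Nat.add_sub_cancel' h).symm⟩
  have key : ∀ (j j' : ℕ) (_ : j = k) (_ : j' = k + 1)
      (pf : S.V (m + 1 + k) = S.V (m + 1 + j)) (pf' : S.V (m + 1 + k) = S.V (m + j')),
      S.φ m (S.phiIter (m + 1) j (cast pf v)) = S.phiIter m j' (cast pf' v) := by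
    rintro j j' rfl rfl pf pf'
    exact phiIter_phi j v pf'
  exact key _ _ (by omega) (by omega) _ _

/-- An upward chain of edges lifting a given edge. -/
noncomputable def chain (S : CoverSystem) (n : ℕ) (e : S.V n × S.V n)
    (he : e ∈ (S.G n).E) : ∀ k, {p : S.V (n + k) × S.V (n + k) // p ∈ (S.G (n + k)).E} :=
  fun k =>
  Nat.rec (motive := fun k => {p : S.V (n + k) × S.V (n + k) // p ∈ (S.G (n + k)).E})
    ⟨e, he⟩
    (fun k prev =>
      let h := (S.cover (n + k)).edgeSurj prev.1 prev.2
      ⟨(h.choose, h.choose_spec.choose), h.choose_spec.choose_spec.1⟩) k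

lemma chain_spec (S : CoverSystem) (n : ℕ) (e : S.V n × S.V n) (he : e ∈ (S.G n).E) (k : ℕ) :
    (S.φ (n + k) (chain S n e he (k + 1)).1.1, S.φ (n + k) (chain S n e he (k + 1)).1.2)
      = (chain S n e he k).1 :=
  ((S.cover (n + k)).edgeSurj (chain S n e he k).1 (chain S n e he k).2).choose_spec.choose_spec.2

/-- The sequence of a point passing through the edge chain. -/
noncomputable def pointSeq (S : CoverSystem) (n : ℕ) (e : S.V n × S.V n)
    (he : e ∈ (S.G n).E) : ∀ m, S.V m := fun m =>
  if h : n ≤ m then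
    cast (congrArg S.V (Nat.add_sub_cancel' h)) (chain S n e he (m - n)).1.1
  else S.phiLE (le_of_not_ge h) e.1

lemma pointSeq_prop (S : CoverSystem) (n : ℕ) (e : S.V n × S.V n) (he : e ∈ (S.G n).E) :
    ∀ m, S.φ m (pointSeq S n e he (m + 1)) = pointSeq S n e he m := by
  intro m
  by_cases h : n ≤ m
  · have h1 : n ≤ m + 1 := h.trans (Nat.le_succ m)
    obtain ⟨k, rfl⟩ : ∃ k, m = n + k := ⟨m - n, (Nat.add_sub_cancel' h).symm⟩
    simp only [pointSeq]
    rw [dif_pos h1, dif_pos h]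
    have key : ∀ (j j' : ℕ) (_ : j = k + 1) (_ : j' = k)
        (pf : S.V (n + j) = S.V (n + k + 1)) (pf' : S.V (n + j') = S.V (n + k)),
        S.φ (n + k) (cast pf (chain S n e he j).1.1) = cast pf' (chain S n e he j').1.1 := by
      rintro j j' rfl rfl pf pf'
      exact congrArg Prod.fst (chain_spec S n e he _)
    exact key _ _ (by omega) (by omega) _ _
  · by_cases h1 : n ≤ m + 1
    · have hn : n = m + 1 := by omega
      subst hn
      simp only [pointSeq]
      rw [dif_pos h1, dif_neg h]
      have key : ∀ (j : ℕ) (_ : j = 0) (pf : S.V (m + 1 + j) = S.V (m + 1)),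
          S.φ m (cast pf (chain S (m + 1) e he j).1.1) = S.phiLE (le_of_not_ge h) e.1 := by
        rintro j rfl pf
        rw [phiLE_succ_self]
        rfl
      exact key _ (by omega) _
    · simp only [pointSeq]
      rw [dif_neg h1, dif_neg h]
      exact phi_phiLE _ _ _

/-- A point of the inverse limit passing through a given edge. -/
noncomputable def pointOf (S : CoverSystem) (n : ℕ) (e : S.V n × S.V n)
    (he : e ∈ (S.G n).E) : S.X := ⟨pointSeq S n e he, pointSeq_prop S n e he⟩

lemma proj_pointOf (S : CoverSystem) (n : ℕ) (e : S.V n × S.V n) (he : e ∈ (S.G n).E) :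
    S.proj (pointOf S n e he) n = e.1 := by
  show pointSeq S n e he n = e.1
  rw [pointSeq, dif_pos (le_refl n)]
  have key : ∀ (j : ℕ) (_ : j = 0) (pf : S.V (n + j) = S.V n),
      cast pf (chain S n e he j).1.1 = e.1 := by rintro j rfl pf; rfl
  exact key _ (by omega) _

lemma proj_pointOf_succ (S : CoverSystem) (n : ℕ) (e : S.V n × S.V n) (he : e ∈ (S.G n).E) :
    S.proj (pointOf S n e he) (n + 1) = (chain S n e he 1).1.1 := by
  show pointSeq S n e he (n + 1) = _
  rw [pointSeq, dif_pos (Nat.le_succ n)]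
  have key : ∀ (j : ℕ) (_ : j = 1) (pf : S.V (n + j) = S.V (n + 1)),
      cast pf (chain S n e he j).1.1 = (chain S n e he 1).1.1 := by rintro j rfl pf; rfl
  exact key _ (by omega) _

lemma pointOf_mem_UEdge (hf : S.IsLimitMap f) {n : ℕ} {e : S.V n × S.V n}
    (he : e ∈ (S.G n).E) : pointOf S n e he ∈ S.UEdge f e := by
  refine ⟨proj_pointOf S n e he, ?_⟩
  have h1 : S.proj (f (pointOf S n e he)) n = S.φ n (S.proj (f (pointOf S n e he)) (n + 1)) :=
    ((f (pointOf S n e he)).prop n).symm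
  have hx := hf (pointOf S n e he) (n + 1)
  rw [proj_pointOf_succ S n e he] at hx
  have hch : ((chain S n e he 1).1.1, (chain S n e he 1).1.2) ∈ (S.G (n + 1)).E :=
    (chain S n e he 1).2
  have hpd := (S.cover n).posDir _ _ _ hch hx
  rw [h1, ← hpd]
  exact congrArg Prod.snd (chain_spec S n e he 0)

lemma UEdge_nonempty (hf : S.IsLimitMap f) {n : ℕ} {e : S.V n × S.V n}
    (he : e ∈ (S.G n).E) : (S.UEdge f e).Nonempty :=
  ⟨pointOf S n e he, pointOf_mem_UEdge hf he⟩

/-- The refinements of an edge `e` at a higher level `m`. -/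
noncomputable def refi (S : CoverSystem) {n m : ℕ} (h : n ≤ m) (e : S.V n × S.V n) :
    Finset (S.V m × S.V m) :=
  Set.Finite.toFinset (Set.toFinite
    {e' : S.V m × S.V m | e' ∈ (S.G m).E ∧ edgeMap (S.phiLE h) e' = e})

lemma mem_refi {n m : ℕ} {h : n ≤ m} {e : S.V n × S.V n} {e' : S.V m × S.V m} :
    e' ∈ refi S h e ↔ e' ∈ (S.G m).E ∧ edgeMap (S.phiLE h) e' = e :=
  Set.Finite.mem_toFinset _

lemma coe_refi (S : CoverSystem) {n m : ℕ} (h : n ≤ m) (e : S.V n × S.V n) :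
    (refi S h e : Set (S.V m × S.V m)) =
      {e' | e' ∈ (S.G m).E ∧ edgeMap (S.phiLE h) e' = e} := Set.Finite.coe_toFinset _

lemma data_mem_refi (hf : S.IsLimitMap f) {n m : ℕ} (h : n ≤ m) {e : S.V n × S.V n}
    {x : S.X} (hx : x ∈ S.UEdge f e) :
    (S.proj x m, S.proj (f x) m) ∈ refi S h e := by
  rw [mem_refi]
  refine ⟨hf x m, ?_⟩
  show (S.phiLE h (S.proj x m), S.phiLE h (S.proj (f x) m)) = e
  rw [phiLE_proj h x, phiLE_proj h (f x), hx.1, hx.2]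

lemma UEdge_subset (hf : S.IsLimitMap f) {n m : ℕ} {h : n ≤ m} {e : S.V n × S.V n}
    {e' : S.V m × S.V m} (he' : e' ∈ refi S h e) : S.UEdge f e' ⊆ S.UEdge f e := by
  intro x hx
  obtain ⟨-, hmap⟩ := mem_refi.mp he'
  constructor
  · rw [← phiLE_proj h x, hx.1]
    exact congrArg Prod.fst hmap
  · rw [← phiLE_proj h (f x), hx.2]
    exact congrArg Prod.snd hmap

lemma eq_data_of_mem_UEdge {n : ℕ} {e : S.V n × S.V n} {x : S.X}
    (hx : x ∈ S.UEdge f e) : e = (S.proj x n, S.proj (f x) n) :=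
  Prod.ext hx.1.symm hx.2.symm

section WithData

variable (a : ∀ n, S.V n × S.V n → ℝ)

lemma welldef_aux (hf : S.IsLimitMap f)
    (hcompat : ∀ m n : ℕ, ∀ h : n < m, ∀ e ∈ (S.G n).E,
      (∑ᶠ e' ∈ {e' : S.V m × S.V m | e' ∈ (S.G m).E ∧ edgeMap (S.phiLE h.le) e' = e},
        a m e') = a n e)
    {n₁ n₂ : ℕ} (hle : n₁ ≤ n₂) {e₁ : S.V n₁ × S.V n₁} {e₂ : S.V n₂ × S.V n₂}
    (h1 : e₁ ∈ (S.G n₁).E) (h2 : e₂ ∈ (S.G n₂).E)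
    (hU : S.UEdge f e₁ = S.UEdge f e₂) : a n₁ e₁ = a n₂ e₂ := by
  obtain ⟨x, hx2⟩ := UEdge_nonempty hf h2
  have hx1 : x ∈ S.UEdge f e₁ := hU ▸ hx2
  rcases eq_or_lt_of_le hle with heq | hlt
  · subst heq
    rw [(eq_data_of_mem_UEdge hx1).trans (eq_data_of_mem_UEdge hx2).symm]
  · have hc := hcompat n₂ n₁ hlt e₁ h1
    have hset : {e' : S.V n₂ × S.V n₂ | e' ∈ (S.G n₂).E ∧ edgeMap (S.phiLE hlt.le) e' = e₁}
        = {e₂} := by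
      ext e'
      simp only [Set.mem_setOf_eq, Set.mem_singleton_iff]
      constructor
      · rintro ⟨he', hmap⟩
        obtain ⟨y, hy⟩ := UEdge_nonempty hf he'
        have hy1 : y ∈ S.UEdge f e₁ := UEdge_subset hf (mem_refi.mpr ⟨he', hmap⟩) hy
        have hy2 : y ∈ S.UEdge f e₂ := hU ▸ hy1
        exact (eq_data_of_mem_UEdge hy).trans (eq_data_of_mem_UEdge hy2).symm
      · rintro rfl
        refine ⟨h2, ?_⟩
        show (S.phiLE hlt.le e'.1, S.phiLE hlt.le e'.2) = e₁
        rw [← hx2.1, ← hx2.2, phiLE_proj hlt.le x, phiLE_proj hlt.le (f x)]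
        exact (eq_data_of_mem_UEdge hx1).symm
    rw [hset, finsum_mem_singleton] at hc
    exact hc.symm

lemma welldef (hf : S.IsLimitMap f)
    (hcompat : ∀ m n : ℕ, ∀ h : n < m, ∀ e ∈ (S.G n).E,
      (∑ᶠ e' ∈ {e' : S.V m × S.V m | e' ∈ (S.G m).E ∧ edgeMap (S.phiLE h.le) e' = e},
        a m e') = a n e)
    {n₁ n₂ : ℕ} {e₁ : S.V n₁ × S.V n₁} {e₂ : S.V n₂ × S.V n₂}
    (h1 : e₁ ∈ (S.G n₁).E) (h2 : e₂ ∈ (S.G n₂).E)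
    (hU : S.UEdge f e₁ = S.UEdge f e₂) : a n₁ e₁ = a n₂ e₂ := by
  rcases le_total n₁ n₂ with h | h
  · exact welldef_aux a hf hcompat h h1 h2 hU
  · exact (welldef_aux a hf hcompat h h2 h1 hU.symm).symm

lemma hcompatE (ha : ∀ n : ℕ, ∀ e ∈ (S.G n).E, 0 ≤ a n e)
    (hcompat : ∀ m n : ℕ, ∀ h : n < m, ∀ e ∈ (S.G n).E,
      (∑ᶠ e' ∈ {e' : S.V m × S.V m | e' ∈ (S.G m).E ∧ edgeMap (S.phiLE h.le) e' = e},
        a m e') = a n e)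
    {n m : ℕ} (h : n < m) {e : S.V n × S.V n} (he : e ∈ (S.G n).E) :
    ∑ e' ∈ refi S h.le e, ENNReal.ofReal (a m e') = ENNReal.ofReal (a n e) := by
  have hc := hcompat m n h e he
  rw [← coe_refi S h.le e, finsum_mem_coe_finset] at hc
  rw [← hc]
  exact (ENNReal.ofReal_sum_of_nonneg fun e' he' => ha m e' (mem_refi.mp he').1).symm

end WithData

end CoverSystem

lemma finset_sum_biUnion_le {ι β : Type*} [DecidableEq β] (I : Finset ι) (t : ι → Finset β)
    (g : β → ENNReal) : ∑ b ∈ I.biUnion t, g b ≤ ∑ i ∈ I, ∑ b ∈ t i, g b := by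
  classical
  induction I using Finset.induction_on with
  | empty => simp
  | @insert i I' hx ih =>
    rw [Finset.biUnion_insert, Finset.sum_insert hx]
    refine le_trans ?_ (add_le_add le_rfl ih)
    calc ∑ b ∈ t i ∪ I'.biUnion t, g b
        ≤ ∑ b ∈ t i ∪ I'.biUnion t, g b + ∑ b ∈ t i ∩ I'.biUnion t, g b := le_self_add
      _ = ∑ b ∈ t i, g b + ∑ b ∈ I'.biUnion t, g b := Finset.sum_union_inter

namespace CoverSystem

variable {S : CoverSystem} {f : S.X → S.X} {a : ∀ n, S.V n × S.V n → ℝ}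

open Classical in
/-- The premeasure on cylinder sets. -/
noncomputable def rho (S : CoverSystem) (f : S.X → S.X) (a : ∀ n, S.V n × S.V n → ℝ) :
    Set S.X → ENNReal := fun s =>
  if s = ∅ then 0
  else if h : ∃ p : Σ n : ℕ, S.V n × S.V n, p.2 ∈ (S.G p.1).E ∧ s = S.UEdge f p.2 then
    ENNReal.ofReal (a h.choose.1 h.choose.2)
  else ⊤

lemma rho_empty (S : CoverSystem) (f : S.X → S.X) (a : ∀ n, S.V n × S.V n → ℝ) :
    rho S f a ∅ = 0 := by simp [rho]

/-- The outer measure generated by the premeasure. -/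
noncomputable def om (S : CoverSystem) (f : S.X → S.X) (a : ∀ n, S.V n × S.V n → ℝ) :
    OuterMeasure S.X :=
  OuterMeasure.ofFunction (rho S f a) (rho_empty S f a)

lemma rho_cases (S : CoverSystem) (f : S.X → S.X) (a : ∀ n, S.V n × S.V n → ℝ) (s : Set S.X) :
    rho S f a s = ⊤ ∨ s = ∅ ∨ ∃ (k : ℕ) (e' : S.V k × S.V k),
      e' ∈ (S.G k).E ∧ s = S.UEdge f e' ∧ rho S f a s = ENNReal.ofReal (a k e') := by
  by_cases h0 : s = ∅
  · exact Or.inr (Or.inl h0)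
  by_cases hex : ∃ p : Σ n : ℕ, S.V n × S.V n, p.2 ∈ (S.G p.1).E ∧ s = S.UEdge f p.2
  · refine Or.inr (Or.inr ⟨hex.choose.1, hex.choose.2, hex.choose_spec.1,
      hex.choose_spec.2, ?_⟩)
    simp only [rho]
    rw [if_neg h0, dif_pos hex]
  · refine Or.inl ?_
    simp only [rho]
    rw [if_neg h0, dif_neg hex]

lemma rho_UEdge (hf : S.IsLimitMap f)
    (hcompat : ∀ m n : ℕ, ∀ h : n < m, ∀ e ∈ (S.G n).E,
      (∑ᶠ e' ∈ {e' : S.V m × S.V m | e' ∈ (S.G m).E ∧ edgeMap (S.phiLE h.le) e' = e},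
        a m e') = a n e)
    {n : ℕ} {e : S.V n × S.V n} (he : e ∈ (S.G n).E) :
    rho S f a (S.UEdge f e) = ENNReal.ofReal (a n e) := by
  have hne : S.UEdge f e ≠ ∅ := (UEdge_nonempty hf he).ne_empty
  have hex : ∃ p : Σ n : ℕ, S.V n × S.V n, p.2 ∈ (S.G p.1).E ∧
      S.UEdge f e = S.UEdge f p.2 := ⟨⟨n, e⟩, he, rfl⟩
  simp only [rho]
  rw [if_neg hne, dif_pos hex]
  exact congrArg ENNReal.ofReal
    (welldef a hf hcompat hex.choose_spec.1 he hex.choose_spec.2.symm)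

lemma om_UEdge_le (hf : S.IsLimitMap f)
    (hcompat : ∀ m n : ℕ, ∀ h : n < m, ∀ e ∈ (S.G n).E,
      (∑ᶠ e' ∈ {e' : S.V m × S.V m | e' ∈ (S.G m).E ∧ edgeMap (S.phiLE h.le) e' = e},
        a m e') = a n e)
    {n : ℕ} {e : S.V n × S.V n} (he : e ∈ (S.G n).E) :
    om S f a (S.UEdge f e) ≤ ENNReal.ofReal (a n e) :=
  (OuterMeasure.ofFunction_le _).trans_eq (rho_UEdge hf hcompat he)

lemma le_tsum_rho (hne : ∀ m, Nonempty (S.V m)) (hf : S.IsLimitMap f)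
    (ha : ∀ n : ℕ, ∀ e ∈ (S.G n).E, 0 ≤ a n e)
    (hcompat : ∀ m n : ℕ, ∀ h : n < m, ∀ e ∈ (S.G n).E,
      (∑ᶠ e' ∈ {e' : S.V m × S.V m | e' ∈ (S.G m).E ∧ edgeMap (S.phiLE h.le) e' = e},
        a m e') = a n e)
    {n : ℕ} {e : S.V n × S.V n} (he : e ∈ (S.G n).E) (t : ℕ → Set S.X)
    (hcov : S.UEdge f e ⊆ ⋃ i, t i) :
    ENNReal.ofReal (a n e) ≤ ∑' i, rho S f a (t i) := by
  classical
  by_cases htop : ∃ i, rho S f a (t i) = ⊤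
  · obtain ⟨i, hi⟩ := htop
    exact le_top.trans (hi ▸ ENNReal.le_tsum i)
  push_neg at htop
  haveI : Nonempty (S.V 0 × S.V 0) := by
    haveI := hne 0; infer_instance
  have hrep : ∀ i, ∃ p : Σ k : ℕ, S.V k × S.V k,
      t i ≠ ∅ → p.2 ∈ (S.G p.1).E ∧ t i = S.UEdge f p.2 ∧
        rho S f a (t i) = ENNReal.ofReal (a p.1 p.2) := by
    intro i
    rcases rho_cases S f a (t i) with h | h | ⟨k, e', he', hteq, hval⟩
    · exact absurd h (htop i)
    · exact ⟨⟨0, Classical.arbitrary _⟩, fun h' => absurd h h'⟩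
    · exact ⟨⟨k, e'⟩, fun _ => ⟨he', hteq, hval⟩⟩
  choose p hp using hrep
  have hopen : ∀ i, IsOpen (t i) := by
    intro i
    by_cases h0 : t i = ∅
    · rw [h0]; exact isOpen_empty
    · rw [(hp i h0).2.1]; exact isOpen_UEdge hf _
  obtain ⟨I, hI⟩ := ((isClosed_UEdge hf e).isCompact).elim_finite_subcover t hopen hcov
  set m := (max n (I.sup fun i => (p i).1)) + 1 with hm
  have hnm : n < m := by omega
  have hpm : ∀ i ∈ I, (p i).1 < m := by
    intro i hi
    have h2 : (p i).1 ≤ I.sup fun i => (p i).1 := Finset.le_sup (f := fun i => (p i).1) hi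
    omega
  let F : ℕ → Finset (S.V m × S.V m) := fun i =>
    if h : i ∈ I ∧ t i ≠ ∅ then refi S (hpm i h.1).le (p i).2 else ∅
  have hsub : refi S hnm.le e ⊆ I.biUnion F := by
    intro e'' he''
    obtain ⟨he''E, -⟩ := mem_refi.mp he''
    obtain ⟨x, hx⟩ := UEdge_nonempty hf he''E
    have hxe : x ∈ S.UEdge f e := UEdge_subset hf he'' hx
    obtain ⟨i, hiI, hit⟩ := Set.mem_iUnion₂.mp (hI hxe)
    have h0 : t i ≠ ∅ := fun h => Set.notMem_empty x (h ▸ hit)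
    rw [Finset.mem_biUnion]
    refine ⟨i, hiI, ?_⟩
    have hx2 : x ∈ S.UEdge f (p i).2 := by rw [← (hp i h0).2.1]; exact hit
    simp only [F, dif_pos (And.intro hiI h0)]
    rw [eq_data_of_mem_UEdge hx]
    exact data_mem_refi hf _ hx2
  calc ENNReal.ofReal (a n e) = ∑ e'' ∈ refi S hnm.le e, ENNReal.ofReal (a m e'') :=
        (hcompatE a ha hcompat hnm he).symm
    _ ≤ ∑ e'' ∈ I.biUnion F, ENNReal.ofReal (a m e'') :=
        Finset.sum_le_sum_of_subset hsub
    _ ≤ ∑ i ∈ I, ∑ e'' ∈ F i, ENNReal.ofReal (a m e'') := finset_sum_biUnion_le I F _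
    _ = ∑ i ∈ I, rho S f a (t i) := by
        refine Finset.sum_congr rfl fun i hi => ?_
        by_cases h0 : t i = ∅
        · simp only [F, dif_neg (fun (hc : i ∈ I ∧ t i ≠ ∅) => hc.2 h0)]
          rw [h0, rho_empty, Finset.sum_empty]
        · simp only [F, dif_pos (And.intro hi h0)]
          rw [(hp i h0).2.2]
          exact hcompatE a ha hcompat (hpm i hi) (hp i h0).1
    _ ≤ ∑' i, rho S f a (t i) := ENNReal.sum_le_tsum I

lemma om_UEdge_eq (hne : ∀ m, Nonempty (S.V m)) (hf : S.IsLimitMap f)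
    (ha : ∀ n : ℕ, ∀ e ∈ (S.G n).E, 0 ≤ a n e)
    (hcompat : ∀ m n : ℕ, ∀ h : n < m, ∀ e ∈ (S.G n).E,
      (∑ᶠ e' ∈ {e' : S.V m × S.V m | e' ∈ (S.G m).E ∧ edgeMap (S.phiLE h.le) e' = e},
        a m e') = a n e)
    {n : ℕ} {e : S.V n × S.V n} (he : e ∈ (S.G n).E) :
    om S f a (S.UEdge f e) = ENNReal.ofReal (a n e) := by
  refine le_antisymm (om_UEdge_le hf hcompat he) ?_
  conv_rhs => rw [om, OuterMeasure.ofFunction_apply]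
  exact le_iInf₂ fun t ht => le_tsum_rho hne hf ha hcompat he t ht

lemma isCara_UEdge (hf : S.IsLimitMap f)
    (ha : ∀ n : ℕ, ∀ e ∈ (S.G n).E, 0 ≤ a n e)
    (hcompat : ∀ m n : ℕ, ∀ h : n < m, ∀ e ∈ (S.G n).E,
      (∑ᶠ e' ∈ {e' : S.V m × S.V m | e' ∈ (S.G m).E ∧ edgeMap (S.phiLE h.le) e' = e},
        a m e') = a n e)
    {n : ℕ} {e : S.V n × S.V n} :
    (om S f a).IsCaratheodory (S.UEdge f e) := by
  classical
  rw [OuterMeasure.isCaratheodory_iff_le']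
  intro s
  have hbound : ∀ u : Set S.X,
      om S f a (u ∩ S.UEdge f e) + om S f a (u \ S.UEdge f e) ≤ rho S f a u := by
    intro u
    rcases rho_cases S f a u with h | h | ⟨k, e', he', hueq, hval⟩
    · exact h ▸ le_top
    · subst h
      rw [Set.empty_inter, Set.empty_diff, rho_empty]
      simp [measure_empty]
    · rw [hval, hueq]
      set m := max n k + 1 with hm
      have hkm : k < m := by omega
      have hnm : n < m := by omega
      set R := refi S hkm.le e' with hR
      set Rin := R.filter (fun e'' => edgeMap (S.phiLE hnm.le) e'' = e) with hRin
      set Rout := R.filter (fun e'' => ¬ edgeMap (S.phiLE hnm.le) e'' = e) with hRout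
      have hin : S.UEdge f e' ∩ S.UEdge f e ⊆ ⋃ d ∈ Rin, S.UEdge f d := by
        rintro x ⟨hx1, hx2⟩
        refine Set.mem_iUnion₂.mpr ⟨_, ?_, mem_UEdge_data hf x m⟩
        rw [hRin, Finset.mem_filter]
        refine ⟨data_mem_refi hf hkm.le hx1, ?_⟩
        show (S.phiLE hnm.le (S.proj x m), S.phiLE hnm.le (S.proj (f x) m)) = e
        rw [phiLE_proj hnm.le x, phiLE_proj hnm.le (f x), hx2.1, hx2.2]
      have hout : S.UEdge f e' \ S.UEdge f e ⊆ ⋃ d ∈ Rout, S.UEdge f d := by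
        rintro x ⟨hx1, hx2⟩
        refine Set.mem_iUnion₂.mpr ⟨_, ?_, mem_UEdge_data hf x m⟩
        rw [hRout, Finset.mem_filter]
        refine ⟨data_mem_refi hf hkm.le hx1, ?_⟩
        intro hmapeq
        apply hx2
        have hthis : (S.phiLE hnm.le (S.proj x m), S.phiLE hnm.le (S.proj (f x) m)) = e :=
          hmapeq
        rw [phiLE_proj hnm.le x, phiLE_proj hnm.le (f x)] at hthis
        exact ⟨congrArg Prod.fst hthis, congrArg Prod.snd hthis⟩
      have hb1 : om S f a (S.UEdge f e' ∩ S.UEdge f e) ≤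
          ∑ d ∈ Rin, ENNReal.ofReal (a m d) := by
        refine le_trans (measure_mono hin) ?_
        refine le_trans (measure_biUnion_finset_le _ _) ?_
        refine Finset.sum_le_sum fun d hd => ?_
        exact om_UEdge_le hf hcompat (mem_refi.mp (Finset.mem_filter.mp hd).1).1
      have hb2 : om S f a (S.UEdge f e' \ S.UEdge f e) ≤
          ∑ d ∈ Rout, ENNReal.ofReal (a m d) := by
        refine le_trans (measure_mono hout) ?_
        refine le_trans (measure_biUnion_finset_le _ _) ?_
        refine Finset.sum_le_sum fun d hd => ?_
        exact om_UEdge_le hf hcompat (mem_refi.mp (Finset.mem_filter.mp hd).1).1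
      calc om S f a (S.UEdge f e' ∩ S.UEdge f e) + om S f a (S.UEdge f e' \ S.UEdge f e)
          ≤ (∑ d ∈ Rin, ENNReal.ofReal (a m d)) + ∑ d ∈ Rout, ENNReal.ofReal (a m d) :=
            add_le_add hb1 hb2
        _ = ∑ d ∈ R, ENNReal.ofReal (a m d) := by
            rw [hRin, hRout]
            exact Finset.sum_filter_add_sum_filter_not R _ _
        _ = ENNReal.ofReal (a k e') := hcompatE a ha hcompat hkm he'
  conv_rhs => rw [om, OuterMeasure.ofFunction_apply]
  refine le_iInf₂ fun t ht => ?_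
  have h1 : s ∩ S.UEdge f e ⊆ ⋃ i, (t i ∩ S.UEdge f e) := by
    rintro x ⟨hxs, hxU⟩
    obtain ⟨i, hi⟩ := Set.mem_iUnion.mp (ht hxs)
    exact Set.mem_iUnion.mpr ⟨i, hi, hxU⟩
  have h2 : s \ S.UEdge f e ⊆ ⋃ i, (t i \ S.UEdge f e) := by
    rintro x ⟨hxs, hxU⟩
    obtain ⟨i, hi⟩ := Set.mem_iUnion.mp (ht hxs)
    exact Set.mem_iUnion.mpr ⟨i, hi, hxU⟩
  calc om S f a (s ∩ S.UEdge f e) + om S f a (s \ S.UEdge f e)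
      ≤ (∑' i, om S f a (t i ∩ S.UEdge f e)) + ∑' i, om S f a (t i \ S.UEdge f e) :=
        add_le_add ((measure_mono h1).trans (measure_iUnion_le _))
          ((measure_mono h2).trans (measure_iUnion_le _))
    _ = ∑' i, (om S f a (t i ∩ S.UEdge f e) + om S f a (t i \ S.UEdge f e)) :=
        ENNReal.tsum_add.symm
    _ ≤ ∑' i, rho S f a (t i) := ENNReal.tsum_le_tsum fun i => hbound (t i)

end CoverSystem

lemma finsum_set_eq_sum_ite {α : Type} [Fintype α] (Q : α → Prop) [∀ x, Decidable (Q x)]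
    (g : α → ℝ) :
    ∑ᶠ x ∈ {x | Q x}, g x = ∑ x : α, if Q x then g x else 0 := by
  classical
  rw [← Set.Finite.coe_toFinset (Set.toFinite {x | Q x}), finsum_mem_coe_finset]
  have h : (Set.toFinite {x | Q x}).toFinset = Finset.univ.filter Q := by
    ext x; simp [Set.Finite.mem_toFinset]
  rw [h, Finset.sum_filter]

lemma sum_pair_collapse_snd {α : Type} [Fintype α] [DecidableEq α] (g : α × α → ENNReal)
    (Q : α × α → Prop) (v : α) [∀ q : α × α, Decidable (Q q ∧ q.2 = v)]
    [∀ q : α × α, Decidable (Q q)] :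
    (∑ q : α × α, if Q q ∧ q.2 = v then g q else 0)
      = ∑ u : α, if Q (u, v) then g (u, v) else 0 := by
  classical
  rw [Fintype.sum_prod_type]
  refine Finset.sum_congr rfl fun u _ => ?_
  have h1 : ∀ z, (if Q (u, z) ∧ z = v then g (u, z) else 0)
      = if z = v then (if Q (u, z) then g (u, z) else 0) else 0 := by
    intro z
    by_cases hz : z = v <;> simp [hz]
  simp_rw [h1]
  rw [Finset.sum_ite_eq' Finset.univ v (fun z => if Q (u, z) then g (u, z) else 0)]
  simp

lemma sum_pair_collapse_fst {α : Type} [Fintype α] [DecidableEq α] (g : α × α → ENNReal)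
    (Q : α × α → Prop) (v : α) [∀ q : α × α, Decidable (Q q ∧ q.1 = v)]
    [∀ q : α × α, Decidable (Q q)] :
    (∑ q : α × α, if Q q ∧ q.1 = v then g q else 0)
      = ∑ z : α, if Q (v, z) then g (v, z) else 0 := by
  classical
  rw [Fintype.sum_prod_type_right]
  refine Finset.sum_congr rfl fun z _ => ?_
  have h1 : ∀ u, (if Q (u, z) ∧ u = v then g (u, z) else 0)
      = if u = v then (if Q (u, z) then g (u, z) else 0) else 0 := by
    intro u
    by_cases hu : u = v <;> simp [hu]
  simp_rw [h1]
  rw [Finset.sum_ite_eq' Finset.univ v (fun u => if Q (u, z) then g (u, z) else 0)]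
  simp

lemma sum_pair_group_snd {α : Type} [Fintype α] (g : α × α → ENNReal) (Q : α × α → Prop)
    (P : α → Prop) [∀ q : α × α, Decidable (Q q ∧ P q.2)] [∀ v, Decidable (P v)]
    [∀ q : α × α, Decidable (Q q)] :
    (∑ q : α × α, if Q q ∧ P q.2 then g q else 0)
      = ∑ v : α, if P v then (∑ u : α, if Q (u, v) then g (u, v) else 0) else 0 := by
  classical
  rw [Fintype.sum_prod_type_right]
  refine Finset.sum_congr rfl fun v _ => ?_
  by_cases hP : P v
  · simp only [hP, and_true, if_true]
  · simp [hP]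

lemma sum_pair_group_fst {α : Type} [Fintype α] (g : α × α → ENNReal) (Q : α × α → Prop)
    (P : α → Prop) [∀ q : α × α, Decidable (Q q ∧ P q.1)] [∀ v, Decidable (P v)]
    [∀ q : α × α, Decidable (Q q)] :
    (∑ q : α × α, if Q q ∧ P q.1 then g q else 0)
      = ∑ v : α, if P v then (∑ z : α, if Q (v, z) then g (v, z) else 0) else 0 := by
  classical
  rw [Fintype.sum_prod_type]
  refine Finset.sum_congr rfl fun v _ => ?_
  by_cases hP : P v
  · simp only [hP, and_true, if_true]
  · simp [hP]

namespace CoverSystem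

variable {S : CoverSystem} {f : S.X → S.X} {a : ∀ n, S.V n × S.V n → ℝ}

/-- A chosen out-neighbour of each vertex. -/
noncomputable def wit (S : CoverSystem) (n : ℕ) (u : S.V (n + 1)) : S.V (n + 1) :=
  ((S.G (n + 1)).surj_init u).choose

lemma wit_mem (S : CoverSystem) (n : ℕ) (u : S.V (n + 1)) :
    (u, wit S n u) ∈ (S.G (n + 1)).E :=
  ((S.G (n + 1)).surj_init u).choose_spec

open Classical in
/-- The edges at level `n+1` whose cylinders partition `f ⁻¹' U(e)`. -/
noncomputable def Dfin (S : CoverSystem) (f : S.X → S.X) (n : ℕ) (e : S.V n × S.V n) :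
    Finset (S.V (n + 1) × S.V (n + 1)) :=
  Finset.univ.filter (fun e' => e' ∈ (S.G (n + 1)).E ∧
    S.φ n e'.2 = e.1 ∧ S.φ n (wit S n e'.2) = e.2)

lemma mem_Dfin {n : ℕ} {e : S.V n × S.V n} {d : S.V (n + 1) × S.V (n + 1)} :
    d ∈ Dfin S f n e ↔ d ∈ (S.G (n + 1)).E ∧
      S.φ n d.2 = e.1 ∧ S.φ n (wit S n d.2) = e.2 := by
  simp [Dfin]

lemma hflowE (ha : ∀ n : ℕ, ∀ e ∈ (S.G n).E, 0 ≤ a n e)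
    (hflow : ∀ (n : ℕ) (v : S.V n),
      (∑ᶠ e ∈ {e : S.V n × S.V n | e ∈ (S.G n).E ∧ e.2 = v}, a n e) =
        ∑ᶠ e ∈ {e : S.V n × S.V n | e ∈ (S.G n).E ∧ e.1 = v}, a n e)
    (n : ℕ) (v : S.V n) [DecidableEq (S.V n)]
    [∀ q : S.V n × S.V n, Decidable (q ∈ (S.G n).E)] :
    (∑ u : S.V n, if (u, v) ∈ (S.G n).E then ENNReal.ofReal (a n (u, v)) else 0)
      = ∑ u : S.V n, if (v, u) ∈ (S.G n).E then ENNReal.ofReal (a n (v, u)) else 0 := by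
  have h := hflow n v
  rw [finsum_set_eq_sum_ite (fun e => e ∈ (S.G n).E ∧ e.2 = v) (a n),
    finsum_set_eq_sum_ite (fun e => e ∈ (S.G n).E ∧ e.1 = v) (a n)] at h
  have h' := congrArg ENNReal.ofReal h
  have hnn : ∀ (Q : S.V n × S.V n → Prop) [DecidablePred Q], (∀ q, Q q → q ∈ (S.G n).E) →
      ENNReal.ofReal (∑ q : S.V n × S.V n, if Q q then a n q else 0)
        = ∑ q : S.V n × S.V n, if Q q then ENNReal.ofReal (a n q) else 0 := by
    intro Q _ hQ
    rw [ENNReal.ofReal_sum_of_nonneg]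
    · refine Finset.sum_congr rfl fun q _ => ?_
      by_cases hq : Q q <;> simp [hq]
    · intro q _
      by_cases hq : Q q
      · rw [if_pos hq]; exact ha n q (hQ q hq)
      · rw [if_neg hq]
  rw [hnn _ (fun q hq => hq.1), hnn _ (fun q hq => hq.1)] at h'
  rw [sum_pair_collapse_snd (fun q => ENNReal.ofReal (a n q)) (fun q => q ∈ (S.G n).E) v,
    sum_pair_collapse_fst (fun q => ENNReal.ofReal (a n q)) (fun q => q ∈ (S.G n).E) v] at h'
  exact h'

lemma sum_Dfin (hf : S.IsLimitMap f)
    (ha : ∀ n : ℕ, ∀ e ∈ (S.G n).E, 0 ≤ a n e)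
    (hflow : ∀ (n : ℕ) (v : S.V n),
      (∑ᶠ e ∈ {e : S.V n × S.V n | e ∈ (S.G n).E ∧ e.2 = v}, a n e) =
        ∑ᶠ e ∈ {e : S.V n × S.V n | e ∈ (S.G n).E ∧ e.1 = v}, a n e)
    (hcompat : ∀ m n : ℕ, ∀ h : n < m, ∀ e ∈ (S.G n).E,
      (∑ᶠ e' ∈ {e' : S.V m × S.V m | e' ∈ (S.G m).E ∧ edgeMap (S.phiLE h.le) e' = e},
        a m e') = a n e)
    {n : ℕ} {e : S.V n × S.V n} (he : e ∈ (S.G n).E) :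
    ∑ e' ∈ Dfin S f n e, ENNReal.ofReal (a (n + 1) e') = ENNReal.ofReal (a n e) := by
  classical
  have step1 : ∑ e' ∈ Dfin S f n e, ENNReal.ofReal (a (n + 1) e')
      = ∑ q : S.V (n + 1) × S.V (n + 1),
          if q ∈ (S.G (n + 1)).E ∧
              (S.φ n q.2 = e.1 ∧ S.φ n (wit S n q.2) = e.2) then
            ENNReal.ofReal (a (n + 1) q) else 0 := by
    rw [Dfin, Finset.sum_filter]
  rw [step1,
    sum_pair_group_snd (fun q => ENNReal.ofReal (a (n + 1) q)) (fun q => q ∈ (S.G (n + 1)).E)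
      (fun u => S.φ n u = e.1 ∧ S.φ n (wit S n u) = e.2)]
  have step3 : ∀ v : S.V (n + 1),
      (∑ u : S.V (n + 1), if (u, v) ∈ (S.G (n + 1)).E then
          ENNReal.ofReal (a (n + 1) (u, v)) else 0)
        = ∑ u : S.V (n + 1), if (v, u) ∈ (S.G (n + 1)).E then
            ENNReal.ofReal (a (n + 1) (v, u)) else 0 :=
    fun v => hflowE ha hflow (n + 1) v
  simp_rw [step3]
  rw [← sum_pair_group_fst (fun q => ENNReal.ofReal (a (n + 1) q))
      (fun q => q ∈ (S.G (n + 1)).E) (fun u => S.φ n u = e.1 ∧ S.φ n (wit S n u) = e.2)]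
  have step5 : ∀ q : S.V (n + 1) × S.V (n + 1),
      (if q ∈ (S.G (n + 1)).E ∧ (S.φ n q.1 = e.1 ∧ S.φ n (wit S n q.1) = e.2) then
          ENNReal.ofReal (a (n + 1) q) else 0)
        = if q ∈ (S.G (n + 1)).E ∧ edgeMap (S.φ n) q = e then
            ENNReal.ofReal (a (n + 1) q) else 0 := by
    intro q
    by_cases hq : q ∈ (S.G (n + 1)).E
    · have hwit : S.φ n (wit S n q.1) = S.φ n q.2 := by
        have h1 : (q.1, wit S n q.1) ∈ (S.G (n + 1)).E := wit_mem S n q.1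
        have h2 : (q.1, q.2) ∈ (S.G (n + 1)).E := hq
        exact (S.cover n).posDir _ _ _ h1 h2
      have hcond : (S.φ n q.1 = e.1 ∧ S.φ n (wit S n q.1) = e.2)
          ↔ edgeMap (S.φ n) q = e := by
        rw [hwit]
        constructor
        · rintro ⟨ha1, ha2⟩
          exact Prod.ext ha1 ha2
        · intro hmap
          exact ⟨congrArg Prod.fst hmap, congrArg Prod.snd hmap⟩
      by_cases hc : S.φ n q.1 = e.1 ∧ S.φ n (wit S n q.1) = e.2
      · rw [if_pos ⟨hq, hc⟩, if_pos ⟨hq, hcond.mp hc⟩]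
      · rw [if_neg (fun hx => hc hx.2), if_neg (fun hx => hc (hcond.mpr hx.2))]
    · rw [if_neg (fun hx => hq hx.1), if_neg (fun hx => hq hx.1)]
  simp_rw [step5]
  have step6 : refi S (Nat.le_succ n) e = Finset.univ.filter
      (fun q : S.V (n + 1) × S.V (n + 1) => q ∈ (S.G (n + 1)).E ∧ edgeMap (S.φ n) q = e) := by
    ext q
    simp only [mem_refi, Finset.mem_filter, Finset.mem_univ, true_and]
    constructor
    · rintro ⟨h1, h2⟩
      refine ⟨h1, ?_⟩
      rw [← h2]
      show (S.φ n q.1, S.φ n q.2) = _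
      rw [← phiLE_succ_self (Nat.le_succ n) q.1, ← phiLE_succ_self (Nat.le_succ n) q.2]
      rfl
    · rintro ⟨h1, h2⟩
      refine ⟨h1, ?_⟩
      rw [← h2]
      show (S.phiLE _ q.1, S.phiLE _ q.2) = _
      rw [phiLE_succ_self (Nat.le_succ n) q.1, phiLE_succ_self (Nat.le_succ n) q.2]
      rfl
  rw [← Finset.sum_filter, ← step6]
  exact hcompatE a ha hcompat (Nat.lt_succ_self n) he

lemma preimage_UEdge_subset (hf : S.IsLimitMap f) {n : ℕ} (e : S.V n × S.V n) :
    f ⁻¹' S.UEdge f e ⊆ ⋃ d ∈ Dfin S f n e, S.UEdge f d := by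
  intro x hx
  refine Set.mem_iUnion₂.mpr ⟨(S.proj x (n + 1), S.proj (f x) (n + 1)), ?_, ⟨rfl, rfl⟩⟩
  rw [mem_Dfin]
  refine ⟨hf x (n + 1), ((f x).prop n).trans hx.1, ?_⟩
  have h1 : (S.proj (f x) (n + 1), wit S n (S.proj (f x) (n + 1))) ∈ (S.G (n + 1)).E :=
    wit_mem S n _
  have h2 : (S.proj (f x) (n + 1), S.proj (f (f x)) (n + 1)) ∈ (S.G (n + 1)).E :=
    hf (f x) (n + 1)
  have hpd := (S.cover n).posDir _ _ _ h1 h2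
  rw [hpd]
  exact ((f (f x)).prop n).trans hx.2

lemma om_preimage_le (hf : S.IsLimitMap f)
    (ha : ∀ n : ℕ, ∀ e ∈ (S.G n).E, 0 ≤ a n e)
    (hflow : ∀ (n : ℕ) (v : S.V n),
      (∑ᶠ e ∈ {e : S.V n × S.V n | e ∈ (S.G n).E ∧ e.2 = v}, a n e) =
        ∑ᶠ e ∈ {e : S.V n × S.V n | e ∈ (S.G n).E ∧ e.1 = v}, a n e)
    (hcompat : ∀ m n : ℕ, ∀ h : n < m, ∀ e ∈ (S.G n).E,
      (∑ᶠ e' ∈ {e' : S.V m × S.V m | e' ∈ (S.G m).E ∧ edgeMap (S.phiLE h.le) e' = e},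
        a m e') = a n e)
    (s : Set S.X) : om S f a (f ⁻¹' s) ≤ om S f a s := by
  conv_rhs => rw [om, OuterMeasure.ofFunction_apply]
  refine le_iInf₂ fun t ht => ?_
  have hcov : f ⁻¹' s ⊆ ⋃ i, f ⁻¹' (t i) := by
    intro x hx
    obtain ⟨i, hi⟩ := Set.mem_iUnion.mp (ht hx)
    exact Set.mem_iUnion.mpr ⟨i, hi⟩
  refine le_trans (measure_mono hcov) ((measure_iUnion_le _).trans ?_)
  refine ENNReal.tsum_le_tsum fun i => ?_
  rcases rho_cases S f a (t i) with h | h | ⟨k, e', he', hteq, hval⟩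
  · rw [h]; exact le_top
  · rw [h, Set.preimage_empty]
    simp [measure_empty]
  · rw [hteq] at hval
    rw [hteq, hval]
    refine le_trans (measure_mono (preimage_UEdge_subset hf e')) ?_
    refine le_trans (measure_biUnion_finset_le _ _) ?_
    refine le_trans (Finset.sum_le_sum fun d hd =>
      om_UEdge_le hf hcompat (mem_Dfin.mp hd).1) ?_
    exact le_of_eq (sum_Dfin hf ha hflow hcompat he')

lemma USet_isCara (hf : S.IsLimitMap f)
    (ha : ∀ n : ℕ, ∀ e ∈ (S.G n).E, 0 ≤ a n e)
    (hcompat : ∀ m n : ℕ, ∀ h : n < m, ∀ e ∈ (S.G n).E,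
      (∑ᶠ e' ∈ {e' : S.V m × S.V m | e' ∈ (S.G m).E ∧ edgeMap (S.phiLE h.le) e' = e},
        a m e') = a n e)
    {n : ℕ} (v : S.V n) :
    MeasurableSet[(om S f a).caratheodory] (S.USet v) := by
  rw [USet_eq_iUnion_UEdge hf v]
  refine @MeasurableSet.iUnion _ _ ((om S f a).caratheodory) _ _ fun w => by
    by_cases hw : (v, w) ∈ (S.G n).E
    · exact (OuterMeasure.isCaratheodory_iff _).mpr (isCara_UEdge hf ha hcompat)
    · rw [UEdge_empty_of_not_mem hf hw]
      exact @MeasurableSet.empty _ ((om S f a).caratheodory)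

lemma borel_le_cara (hf : S.IsLimitMap f)
    (ha : ∀ n : ℕ, ∀ e ∈ (S.G n).E, 0 ≤ a n e)
    (hcompat : ∀ m n : ℕ, ∀ h : n < m, ∀ e ∈ (S.G n).E,
      (∑ᶠ e' ∈ {e' : S.V m × S.V m | e' ∈ (S.G m).E ∧ edgeMap (S.phiLE h.le) e' = e},
        a m e') = a n e) :
    (borel S.X : MeasurableSpace S.X) ≤ (om S f a).caratheodory := by
  rw [borel]
  refine MeasurableSpace.generateFrom_le fun u hu => ?_
  rw [isOpen_eq_iUnion hu]
  exact MeasurableSet.iUnion fun p =>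
    MeasurableSet.iUnion fun _ => USet_isCara hf ha hcompat p.2

end CoverSystem

/-- A compatible assignment of nonnegative masses to the edge
sets `U(e)`, satisfying the flow condition at each vertex, extends to an
`f`-invariant Borel measure on the inverse limit. -/
theorem invariant_measure_from_edge_masses (S : CoverSystem) (f : S.X → S.X)
    (hf : S.IsLimitMap f) (a : ∀ n, S.V n × S.V n → ℝ)
    (ha : ∀ n : ℕ, ∀ e ∈ (S.G n).E, 0 ≤ a n e)
    (hflow : ∀ (n : ℕ) (v : S.V n),
      (∑ᶠ e ∈ {e : S.V n × S.V n | e ∈ (S.G n).E ∧ e.2 = v}, a n e) =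
        ∑ᶠ e ∈ {e : S.V n × S.V n | e ∈ (S.G n).E ∧ e.1 = v}, a n e)
    (hcompat : ∀ m n : ℕ, ∀ h : n < m, ∀ e ∈ (S.G n).E,
      (∑ᶠ e' ∈ {e' : S.V m × S.V m | e' ∈ (S.G m).E ∧ edgeMap (S.phiLE h.le) e' = e},
        a m e') = a n e) :
    ∃ μ : MeasureTheory.Measure S.X, S.Invariant f μ ∧
      ∀ n : ℕ, ∀ e ∈ (S.G n).E, μ (S.UEdge f e) = ENNReal.ofReal (a n e) := by
  classical
  by_cases hne : ∀ m, Nonempty (S.V m)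
  · -- main case: all levels are nonempty
    have hb : S.instMeasurableSpaceX ≤ (CoverSystem.om S f a).caratheodory :=
      CoverSystem.borel_le_cara hf ha hcompat
    set μ := (CoverSystem.om S f a).toMeasure hb with hμ
    have hmeasf : Measurable f := (CoverSystem.continuous_limit_map hf).measurable
    have hUEdge_meas : ∀ (n : ℕ) (e : S.V n × S.V n), MeasurableSet (S.UEdge f e) :=
      fun n e => (CoverSystem.isOpen_UEdge hf e).measurableSet
    refine ⟨μ, ?_, ?_⟩
    · -- invariance
      intro B hB
      have hBf : MeasurableSet (f ⁻¹' B) := hmeasf hB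
      obtain ⟨v0⟩ := hne 0
      obtain ⟨u0, hu0⟩ := (S.G 0).surj_init v0
      have huniv : (Set.univ : Set S.X) = S.UEdge f (v0, u0) := by
        ext x
        simp only [Set.mem_univ, true_iff]
        exact ⟨S.V0_single _ _, S.V0_single _ _⟩
      have hfin : μ Set.univ ≠ ⊤ := by
        rw [huniv, hμ, MeasureTheory.toMeasure_apply _ _ (hUEdge_meas 0 (v0, u0)),
          CoverSystem.om_UEdge_eq hne hf ha hcompat hu0]
        exact ENNReal.ofReal_ne_top
      have hle : ∀ C : Set S.X, MeasurableSet C → μ (f ⁻¹' C) ≤ μ C := by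
        intro C hC
        rw [hμ, MeasureTheory.toMeasure_apply _ _ (hmeasf hC),
          MeasureTheory.toMeasure_apply _ _ hC]
        exact CoverSystem.om_preimage_le hf ha hflow hcompat C
      have h1 := hle B hB
      have h2 := hle Bᶜ hB.compl
      have hsum1 : μ (f ⁻¹' B) + μ (f ⁻¹' Bᶜ) = μ Set.univ := by
        rw [← measure_union (disjoint_compl_right.preimage f) (hmeasf hB.compl),
          ← Set.preimage_union, Set.union_compl_self, Set.preimage_univ]
      have hsum2 : μ B + μ Bᶜ = μ Set.univ := measure_add_measure_compl hB
      have hBc_fin : μ Bᶜ ≠ ⊤ :=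
        fun h => hfin (top_le_iff.mp (h ▸ measure_mono (Set.subset_univ Bᶜ)))
      have hge : μ B ≤ μ (f ⁻¹' B) := by
        have hcalc : μ B + μ Bᶜ ≤ μ (f ⁻¹' B) + μ Bᶜ := by
          rw [hsum2, ← hsum1]
          exact add_le_add le_rfl h2
        exact (ENNReal.add_le_add_iff_right hBc_fin).mp hcalc
      exact le_antisymm h1 hge
    · -- values on edge cylinders
      intro n e he
      rw [hμ, MeasureTheory.toMeasure_apply _ _ (hUEdge_meas n e)]
      exact CoverSystem.om_UEdge_eq hne hf ha hcompat he
  · -- degenerate case: some level is empty, so all masses vanish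
    push_neg at hne
    obtain ⟨m0, hm0⟩ := hne
    haveI hm0' : IsEmpty (S.V m0) := hm0
    refine ⟨0, fun B _ => rfl, fun n e he => ?_⟩
    have hnm : n < m0 := by
      by_contra hcon
      push_neg at hcon
      exact hm0.false (S.phiLE hcon e.1)
    have h0 := hcompat m0 n hnm e he
    have hsetempty : {e' : S.V m0 × S.V m0 | e' ∈ (S.G m0).E ∧
        edgeMap (S.phiLE hnm.le) e' = e} = ∅ :=
      Set.eq_empty_iff_forall_notMem.mpr fun e' _ => (hm0'.false e'.1).elim
    rw [hsetempty, finsum_mem_empty] at h0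
    rw [← h0]
    simp
end

section
/- For every graph G, 𝒫(G) = Hull(𝒞(G)), i.e. the set 𝒫(G) equals the set of all convex combinations Σ_{c∈𝒞(G)} s(c)·c̃ with s(c) ≥ 0 for all c ∈ 𝒞(G) and Σ_{c∈𝒞(G)} s(c) = 1. -/
open Filter Topology MeasureTheory

set_option linter.unusedSectionVars false

section Statement8Aux

variable {V : Type} [Fintype V]

lemma circVec_apply (c : Set (V × V)) (e : V × V) [Decidable (e ∈ c)] :
    circVec c e = if e ∈ c then 1 else 0 := by
  simp [circVec, Set.indicator_apply]

lemma circVec_nonneg (c : Set (V × V)) (e : V × V) : 0 ≤ circVec c e := by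
  classical
  rw [circVec_apply]
  split <;> norm_num

lemma sum_circVec (c : Set (V × V)) : (∑ e : V × V, circVec c e) = c.ncard := by
  classical
  have h1 : (∑ e : V × V, circVec c e) = ∑ e : V × V, if e ∈ c then (1:ℝ) else 0 :=
    Finset.sum_congr rfl fun e _ => circVec_apply c e
  rw [h1, Finset.sum_boole, Set.ncard_eq_toFinset_card']
  congr 2
  ext e
  simp

section Walk

variable {l : ℕ} {w : Fin (l + 1) → V}

lemma walk_inj_succ
    (hdist : ∀ i j : Fin (l + 1), i < j → w i = w j → i = 0 ∧ j = Fin.last l)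
    {i j : Fin l} (h : w i.succ = w j.succ) : i = j := by
  by_contra hne
  rcases lt_or_gt_of_ne hne with hlt | hlt
  · exact Fin.succ_ne_zero i (hdist i.succ j.succ (Fin.succ_lt_succ_iff.mpr hlt) h).1
  · exact Fin.succ_ne_zero j (hdist j.succ i.succ (Fin.succ_lt_succ_iff.mpr hlt) h.symm).1

lemma walk_inj_castSucc
    (hdist : ∀ i j : Fin (l + 1), i < j → w i = w j → i = 0 ∧ j = Fin.last l)
    {i j : Fin l} (h : w i.castSucc = w j.castSucc) : i = j := by
  by_contra hne
  rcases lt_or_gt_of_ne hne with hlt | hlt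
  · exact absurd (hdist i.castSucc j.castSucc (Fin.castSucc_lt_castSucc_iff.mpr hlt) h).2
      (Fin.castSucc_lt_last j).ne
  · exact absurd (hdist j.castSucc i.castSucc (Fin.castSucc_lt_castSucc_iff.mpr hlt) h.symm).2
      (Fin.castSucc_lt_last i).ne

lemma walk_img (hl : 0 < l) (hclose : w (Fin.last l) = w 0) (v : V) :
    (∃ i : Fin l, w i.succ = v) ↔ ∃ j : Fin l, w j.castSucc = v := by
  constructor
  · rintro ⟨i, rfl⟩
    by_cases h : (i : ℕ) + 1 = l
    · refine ⟨⟨0, hl⟩, ?_⟩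
      have h1 : i.succ = Fin.last l := by
        ext; simpa using h
      have h0 : (⟨0, hl⟩ : Fin l).castSucc = (0 : Fin (l + 1)) := rfl
      rw [h0, h1, hclose]
    · have hlt : (i : ℕ) + 1 < l := lt_of_le_of_ne i.isLt h
      have he : (⟨(i : ℕ) + 1, hlt⟩ : Fin l).castSucc = i.succ := by ext; simp
      exact ⟨⟨(i : ℕ) + 1, hlt⟩, by rw [he]⟩
  · rintro ⟨j, rfl⟩
    by_cases h : (j : ℕ) = 0
    · refine ⟨⟨l - 1, Nat.sub_lt hl one_pos⟩, ?_⟩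
      have h1 : (⟨l - 1, Nat.sub_lt hl one_pos⟩ : Fin l).succ = Fin.last l := by
        ext; simp; omega
      have h0 : j.castSucc = (0 : Fin (l + 1)) := by ext; simpa using h
      rw [h1, hclose, h0]
    · have he : (⟨(j : ℕ) - 1, lt_trans (Nat.pred_lt h) j.isLt⟩ : Fin l).succ = j.castSucc := by
        ext; simp; omega
      exact ⟨⟨(j : ℕ) - 1, lt_trans (Nat.pred_lt h) j.isLt⟩, by rw [he]⟩

open Classical in
lemma count_in
    (hdist : ∀ i j : Fin (l + 1), i < j → w i = w j → i = 0 ∧ j = Fin.last l) (v : V) :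
    (∑ u : V, circVec (walkEdges w) (u, v))
      = if ∃ i : Fin l, w i.succ = v then 1 else 0 := by
  classical
  split_ifs with h
  · obtain ⟨i, hi⟩ := h
    rw [Finset.sum_eq_single_of_mem (w i.castSucc) (Finset.mem_univ _)]
    · rw [circVec_apply, if_pos ⟨i, by rw [hi]⟩]
    · intro u _ hu
      rw [circVec_apply, if_neg]
      rintro ⟨j, hj⟩
      rw [Prod.mk.injEq] at hj
      have : j = i := walk_inj_succ hdist (by rw [← hj.2, hi])
      exact hu (by rw [hj.1, this])
  · refine Finset.sum_eq_zero fun u _ => ?_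
    rw [circVec_apply, if_neg]
    rintro ⟨j, hj⟩
    rw [Prod.mk.injEq] at hj
    exact h ⟨j, hj.2.symm⟩

open Classical in
lemma count_out
    (hdist : ∀ i j : Fin (l + 1), i < j → w i = w j → i = 0 ∧ j = Fin.last l) (v : V) :
    (∑ u : V, circVec (walkEdges w) (v, u))
      = if ∃ i : Fin l, w i.castSucc = v then 1 else 0 := by
  classical
  split_ifs with h
  · obtain ⟨i, hi⟩ := h
    rw [Finset.sum_eq_single_of_mem (w i.succ) (Finset.mem_univ _)]
    · rw [circVec_apply, if_pos ⟨i, by rw [hi]⟩]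
    · intro u _ hu
      rw [circVec_apply, if_neg]
      rintro ⟨j, hj⟩
      rw [Prod.mk.injEq] at hj
      have : j = i := walk_inj_castSucc hdist (by rw [← hj.1, hi])
      exact hu (by rw [hj.2, this])
  · refine Finset.sum_eq_zero fun u _ => ?_
    rw [circVec_apply, if_neg]
    rintro ⟨j, hj⟩
    rw [Prod.mk.injEq] at hj
    exact h ⟨j, hj.1.symm⟩

end Walk

lemma circVec_flow {G : DirGraph V} {c : Set (V × V)} (hc : IsCircuitIn G c) (v : V) :
    (∑ u : V, circVec c (u, v)) = ∑ u : V, circVec c (v, u) := by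
  classical
  obtain ⟨l, hl, w, hwalk, hclose, hdist, rfl⟩ := hc
  rw [count_in hdist v, count_out hdist v]
  exact if_congr (walk_img hl hclose v) rfl rfl

lemma circuit_subset {G : DirGraph V} {c : Set (V × V)} (hc : IsCircuitIn G c) : c ⊆ G.E := by
  obtain ⟨l, hl, w, hwalk, -, -, rfl⟩ := hc
  rintro e ⟨i, rfl⟩
  exact hwalk i

lemma circuit_ncard_pos {G : DirGraph V} {c : Set (V × V)} (hc : IsCircuitIn G c) :
    0 < c.ncard := by
  obtain ⟨l, hl, w, -, -, -, rfl⟩ := hc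
  have hne : (walkEdges w).Nonempty := ⟨(w (⟨0, hl⟩ : Fin l).castSucc, w (⟨0, hl⟩ : Fin l).succ), ⟨⟨0, hl⟩, rfl⟩⟩
  exact (Set.ncard_pos (Set.toFinite _)).mpr hne

end Statement8Aux
section Statement8Aux2

variable {V : Type} [Fintype V]

lemma exists_circuit_pos {G : DirGraph V} {a : V × V → ℝ} (ha : MemI G a)
    {e0 : V × V} (he0 : a e0 ≠ 0) :
    ∃ c, IsCircuitIn G c ∧ ∀ e ∈ c, 0 < a e := by
  classical
  obtain ⟨⟨hnn, hsupp⟩, hflow⟩ := ha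
  have hpos : ∀ e, a e ≠ 0 → 0 < a e := fun e he => (hnn e).lt_of_ne (Ne.symm he)
  set S : Set V := {v | 0 < ∑ u : V, a (v, u)} with hS
  have hout : ∀ u v : V, 0 < a (u, v) → u ∈ S := by
    intro u v h
    exact lt_of_lt_of_le h (Finset.single_le_sum (fun x _ => hnn (u, x)) (Finset.mem_univ v))
  have hstep : ∀ u v : V, 0 < a (u, v) → v ∈ S := by
    intro u v h
    have hin : 0 < ∑ x : V, a (x, v) :=
      lt_of_lt_of_le h (Finset.single_le_sum (fun x _ => hnn (x, v)) (Finset.mem_univ u))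
    rw [hflow v] at hin
    exact hin
  have hchoice : ∀ v : V, ∃ u : V, v ∈ S → 0 < a (v, u) := by
    intro v
    by_cases hv : v ∈ S
    · have h0 : (∑ u : V, (0 : ℝ)) < ∑ u : V, a (v, u) := by simp only [Finset.sum_const_zero]; exact hv
      obtain ⟨u, -, hu⟩ := Finset.exists_lt_of_sum_lt h0
      exact ⟨u, fun _ => hu⟩
    · exact ⟨v, fun h => absurd h hv⟩
  choose g hg using hchoice
  have hgS : ∀ v ∈ S, g v ∈ S := fun v hv => hstep v (g v) (hg v hv)
  have hu0 : e0.1 ∈ S := hout e0.1 e0.2 (hpos _ he0)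
  set h : ℕ → V := fun k => g^[k] e0.1 with hh
  have hhS : ∀ k, h k ∈ S := by
    intro k
    induction k with
    | zero => exact hu0
    | succ k ih =>
        have : h (k + 1) = g (h k) := Function.iterate_succ_apply' g k e0.1
        rw [this]
        exact hgS _ ih
  have hedge : ∀ k, 0 < a (h k, h (k + 1)) := by
    intro k
    have heq : h (k + 1) = g (h k) := Function.iterate_succ_apply' g k e0.1
    rw [heq]
    exact hg _ (hhS k)
  obtain ⟨p, q, hpq, heq⟩ := Finite.exists_ne_map_eq_of_infinite h
  have hP : ∃ j, ∃ i, i < j ∧ h i = h j := by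
    rcases Nat.lt_or_ge p q with hlt | hge
    · exact ⟨q, p, hlt, heq⟩
    · exact ⟨p, q, lt_of_le_of_ne hge (Ne.symm hpq), heq.symm⟩
  set j0 := Nat.find hP with hj0
  obtain ⟨i0, hij, hval⟩ := Nat.find_spec hP
  have hmin : ∀ m, m < j0 → ¬ ∃ i, i < m ∧ h i = h m := fun m hm => Nat.find_min hP hm
  set l := j0 - i0 with hldef
  have hl : 0 < l := Nat.sub_pos_of_lt hij
  have hil : i0 + l = j0 := Nat.add_sub_cancel' hij.le
  set w : Fin (l + 1) → V := fun k => h (i0 + (k : ℕ)) with hw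
  have hwc : ∀ k : Fin l, w k.castSucc = h (i0 + (k : ℕ)) := by
    intro k; simp [hw]
  have hws : ∀ k : Fin l, w k.succ = h ((i0 + (k : ℕ)) + 1) := by
    intro k; simp [hw, Nat.add_assoc]
  have hposedge : ∀ k : Fin l, 0 < a (w k.castSucc, w k.succ) := by
    intro k
    rw [hwc, hws]
    exact hedge _
  refine ⟨walkEdges w, ⟨l, hl, w, ?_, ?_, ?_, rfl⟩, ?_⟩
  · intro k
    by_contra hE
    exact absurd (hsupp _ hE) (hposedge k).ne'
  · show h (i0 + ((Fin.last l : Fin (l+1)) : ℕ)) = h (i0 + ((0 : Fin (l + 1)) : ℕ))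
    simp only [Fin.val_last, Fin.val_zero, Nat.add_zero, hil]
    exact hval.symm
  · intro k1 k2 hlt heq'
    have hv1 : (k1 : ℕ) < (k2 : ℕ) := hlt
    have hv2 : (k2 : ℕ) ≤ l := Nat.lt_succ_iff.mp k2.isLt
    rcases eq_or_lt_of_le hv2 with hk2 | hk2
    · have hiz : h (i0 + (k2 : ℕ)) = h i0 := by rw [hk2, hil, ← hval]
      have hk10 : (k1 : ℕ) = 0 := by
        by_contra hk10
        have h1 : i0 < i0 + (k1 : ℕ) := Nat.lt_add_of_pos_right (Nat.pos_of_ne_zero hk10)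
        have h2 : i0 + (k1 : ℕ) < j0 := by omega
        have heq'' : h (i0 + (k1 : ℕ)) = h (i0 + (k2 : ℕ)) := heq'
        exact hmin _ h2 ⟨i0, h1, (heq''.trans hiz).symm⟩
      constructor
      · exact Fin.ext hk10
      · exact Fin.ext (by simp [hk2])
    · exfalso
      have h2 : i0 + (k2 : ℕ) < j0 := by omega
      have heq'' : h (i0 + (k1 : ℕ)) = h (i0 + (k2 : ℕ)) := heq'
      exact hmin _ h2 ⟨i0 + (k1 : ℕ), by omega, heq''⟩
  · rintro e ⟨k, rfl⟩
    exact hposedge k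
end Statement8Aux2
section Statement8Aux3

variable {V : Type} [Fintype V]

lemma decomp (G : DirGraph V) :
    ∀ n : ℕ, ∀ a : V × V → ℝ, MemI G a →
      (Finset.univ.filter fun e => a e ≠ 0).card ≤ n →
      ∃ s : Set (V × V) → ℝ, (∀ c, 0 ≤ s c) ∧ (∀ c, c ∉ circuitsOf G → s c = 0) ∧
        ∀ e, a e = ∑ c ∈ (Set.toFinite (circuitsOf G)).toFinset, s c * circVec c e := by
  classical
  intro n
  induction n with
  | zero =>
      intro a ha hcard
      refine ⟨0, fun c => le_refl 0, fun c _ => rfl, fun e => ?_⟩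
      have hz : a e = 0 := by
        by_contra h
        have hmem : e ∈ Finset.univ.filter fun e => a e ≠ 0 := by
          simp [h]
        have := Finset.card_pos.mpr ⟨e, hmem⟩
        omega
      simp [hz]
  | succ n ih =>
      intro a ha hcard
      by_cases h0 : ∀ e, a e = 0
      · refine ⟨0, fun c => le_refl 0, fun c _ => rfl, fun e => by simp [h0 e]⟩
      push_neg at h0
      obtain ⟨e0, he0⟩ := h0
      obtain ⟨c, hc, hcpos⟩ := exists_circuit_pos ha he0
      have hcf : c.Finite := Set.toFinite c
      have hcne : hcf.toFinset.Nonempty := by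
        rw [Set.Finite.toFinset_nonempty]
        exact Set.nonempty_of_ncard_ne_zero (circuit_ncard_pos hc).ne'
      set t := hcf.toFinset.inf' hcne a with ht
      have htpos : 0 < t :=
        (Finset.lt_inf'_iff hcne).mpr fun e hy => hcpos e (hcf.mem_toFinset.mp hy)
      obtain ⟨estar, hestar, htval⟩ := Finset.exists_mem_eq_inf' hcne a
      set a' : V × V → ℝ := fun e => a e - t * circVec c e with ha'
      have hub : ∀ e ∈ c, t ≤ a e := fun e hy => Finset.inf'_le a (hcf.mem_toFinset.mpr hy)
      have ha'nn : ∀ e, 0 ≤ a' e := by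
        intro e
        rw [ha']
        simp only
        rw [circVec_apply]
        split_ifs with hec
        · linarith [hub e hec]
        · simpa using ha.1.1 e
      have ha'supp : ∀ e ∉ G.E, a' e = 0 := by
        intro e he
        have h1 : a e = 0 := ha.1.2 e he
        have h2 : e ∉ c := fun hec => he (circuit_subset hc hec)
        rw [ha']
        simp only
        rw [circVec_apply, if_neg h2, h1]
        ring
      have ha'flow : ∀ v, (∑ u : V, a' (u, v)) = ∑ u : V, a' (v, u) := by
        intro v
        rw [ha']
        simp only
        rw [Finset.sum_sub_distrib, Finset.sum_sub_distrib, ← Finset.mul_sum, ← Finset.mul_sum,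
          ha.2 v, circVec_flow hc v]
      have ha'I : MemI G a' := ⟨⟨ha'nn, ha'supp⟩, ha'flow⟩
      have hzero : ∀ e, a e = 0 → a' e = 0 := by
        intro e he
        have h2 : e ∉ c := fun hec => absurd he (hcpos e hec).ne'
        rw [ha']
        simp only
        rw [circVec_apply, if_neg h2, he]
        ring
      have hsub : (Finset.univ.filter fun e => a' e ≠ 0) ⊂ Finset.univ.filter fun e => a e ≠ 0 := by
        constructor
        · intro e he
          simp only [Finset.mem_filter, Finset.mem_univ, true_and] at he ⊢
          intro hz
          exact he (hzero e hz)
        · intro hsup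
          have h1 : estar ∈ Finset.univ.filter fun e => a e ≠ 0 := by
            simp only [Finset.mem_filter, Finset.mem_univ, true_and]
            exact fun hz => absurd hz.symm (by rw [← htval]; exact htpos.ne)
          have h2 := hsup h1
          simp only [Finset.mem_filter, Finset.mem_univ, true_and] at h2
          apply h2
          rw [ha']
          simp only
          rw [circVec_apply, if_pos (hcf.mem_toFinset.mp hestar), ← htval]
          ring
      have hcard' : (Finset.univ.filter fun e => a' e ≠ 0).card ≤ n := by
        have := Finset.card_lt_card hsub
        omega
      obtain ⟨s', hs'1, hs'2, hs'3⟩ := ih a' ha'I hcard'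
      have hcC : c ∈ (Set.toFinite (circuitsOf G)).toFinset := by
        rw [Set.Finite.mem_toFinset]
        exact hc
      refine ⟨fun d => s' d + if d = c then t else 0, ?_, ?_, ?_⟩
      · intro d
        show 0 ≤ s' d + if d = c then t else 0
        have := hs'1 d
        split_ifs <;> linarith
      · intro d hd
        show (s' d + if d = c then t else 0) = 0
        rw [hs'2 d hd, if_neg (fun hdc : d = c => hd (by rw [hdc]; exact hc)), add_zero]
      · intro e
        have h1 : a e = a' e + t * circVec c e := by rw [ha']; ring
        show a e = ∑ d ∈ (Set.toFinite (circuitsOf G)).toFinset,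
          (s' d + if d = c then t else 0) * circVec d e
        rw [h1, hs'3 e]
        rw [Finset.sum_congr rfl (fun d _ => add_mul (s' d) _ (circVec d e)),
          Finset.sum_add_distrib]
        congr 1
        rw [Finset.sum_congr rfl
          (fun d hd => show (if d = c then t else 0) * circVec d e
              = if d = c then t * circVec c e else 0 by split_ifs with h <;> simp [h]),
          Finset.sum_ite_eq' _ c, if_pos hcC]

end Statement8Aux3
/-- `𝒫(G) = Hull(𝒞(G))`: the elements of `𝒫(G)` are exactly
the convex combinations of the normalized circuits `c̃`. -/
theorem memP_iff_convex_combination_of_circuits {V : Type} [Fintype V]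
    (G : DirGraph V) (a : V × V → ℝ) :
    MemP G a ↔ ∃ s : Set (V × V) → ℝ, (∀ c, 0 ≤ s c) ∧
      (∑ᶠ c ∈ circuitsOf G, s c) = 1 ∧
      ∀ e : V × V, a e = ∑ᶠ c ∈ circuitsOf G, s c * circTilde c e := by
  classical
  have hfin : (circuitsOf G).Finite := Set.toFinite _
  constructor
  · rintro ⟨hI, hmass⟩
    obtain ⟨s0, h1, h2, h3⟩ := decomp G _ a hI le_rfl
    refine ⟨fun c => s0 c * (c.ncard : ℝ),
      fun c => mul_nonneg (h1 c) (Nat.cast_nonneg _), ?_, ?_⟩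
    · rw [finsum_mem_eq_finite_toFinset_sum _ hfin]
      have hrw : ∀ c ∈ hfin.toFinset,
          s0 c * (c.ncard : ℝ) = ∑ e : V × V, s0 c * circVec c e := by
        intro c hc
        rw [← Finset.mul_sum, sum_circVec]
      rw [Finset.sum_congr rfl hrw, Finset.sum_comm,
        Finset.sum_congr rfl (fun e _ => (h3 e).symm)]
      exact hmass
    · intro e
      rw [finsum_mem_eq_finite_toFinset_sum _ hfin, h3 e]
      refine Finset.sum_congr rfl fun c hc => ?_
      have hcirc : IsCircuitIn G c := hfin.mem_toFinset.mp hc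
      have hn : ((c.ncard : ℝ)) ≠ 0 := by
        exact_mod_cast (circuit_ncard_pos hcirc).ne'
      show s0 c * circVec c e = s0 c * (c.ncard : ℝ) * circTilde c e
      rw [show circTilde c e = ((c.ncard : ℝ))⁻¹ * circVec c e from rfl,
        mul_assoc, ← mul_assoc ((c.ncard : ℝ)), mul_inv_cancel₀ hn, one_mul]
  · rintro ⟨s, hs0, hs1, hs2⟩
    rw [finsum_mem_eq_finite_toFinset_sum _ hfin] at hs1
    have hs2' : ∀ e, a e = ∑ c ∈ hfin.toFinset, s c * circTilde c e := by
      intro e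
      rw [hs2 e, finsum_mem_eq_finite_toFinset_sum _ hfin]
    have htnn : ∀ (c : Set (V × V)) (e : V × V), 0 ≤ circTilde c e := fun c e =>
      mul_nonneg (inv_nonneg.mpr (Nat.cast_nonneg _)) (circVec_nonneg c e)
    have hmemE : ∀ c ∈ hfin.toFinset, ∀ e, e ∉ G.E → circTilde c e = 0 := by
      intro c hc e he
      have hec : e ∉ c := fun hec => he (circuit_subset (hfin.mem_toFinset.mp hc) hec)
      show ((c.ncard : ℝ))⁻¹ * circVec c e = 0
      rw [circVec_apply, if_neg hec, mul_zero]
    have hmass1 : ∀ c ∈ hfin.toFinset, (∑ e : V × V, circTilde c e) = 1 := by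
      intro c hc
      have hn : ((c.ncard : ℝ)) ≠ 0 := by
        exact_mod_cast (circuit_ncard_pos (hfin.mem_toFinset.mp hc)).ne'
      show (∑ e : V × V, ((c.ncard : ℝ))⁻¹ * circVec c e) = 1
      rw [← Finset.mul_sum, sum_circVec, inv_mul_cancel₀ hn]
    have hswap : ∀ F : V → V × V,
        (∑ u : V, a (F u)) = ∑ c ∈ hfin.toFinset, s c * ∑ u : V, circTilde c (F u) := by
      intro F
      rw [Finset.sum_congr rfl (fun u (_ : u ∈ Finset.univ) => hs2' (F u)), Finset.sum_comm]
      exact Finset.sum_congr rfl fun c _ => (Finset.mul_sum _ _ _).symm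
    refine ⟨⟨⟨?_, ?_⟩, ?_⟩, ?_⟩
    · intro e
      rw [hs2' e]
      exact Finset.sum_nonneg fun c _ => mul_nonneg (hs0 c) (htnn c e)
    · intro e he
      rw [hs2' e]
      exact Finset.sum_eq_zero fun c hc => by rw [hmemE c hc e he, mul_zero]
    · intro v
      rw [hswap (fun u => (u, v)), hswap (fun u => (v, u))]
      refine Finset.sum_congr rfl fun c hc => ?_
      congr 1
      show (∑ u : V, ((c.ncard : ℝ))⁻¹ * circVec c (u, v))
        = ∑ u : V, ((c.ncard : ℝ))⁻¹ * circVec c (v, u)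
      rw [← Finset.mul_sum, ← Finset.mul_sum,
        circVec_flow (hfin.mem_toFinset.mp hc) v]
    · rw [Finset.sum_congr rfl (fun e (_ : e ∈ Finset.univ) => hs2' e), Finset.sum_comm,
        Finset.sum_congr rfl
          (fun c hc => by rw [← Finset.mul_sum, hmass1 c hc, mul_one])]
      exact hs1
end
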